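/- Let d ≥ 1, let Σ be a symmetric positive-definite d×d real matrix, u ∈ ℝᵈ, C > 0, and f(v) = C·exp(−(1/2)·(v − u)·Σ⁻¹·(v − u)). Let β : ℝᵈ → ℝ be continuous, bounded, and strictly positive everywhere. With n_β = ∫ β f dv, p_β = ∫ v β f dv, A_β = −∫ β ∇f dv, and B_β = −∫ β (v·∇f) dv, one has n_β·B_β − A_β·p_β > 0. -/

import Mathlib

open MeasureTheory
open scoped RealInnerProductSpace

lemma aux_gauss_int {d : ℕ} {b : ℝ} (hb : 0 < b) :
    Integrable (fun v : EuclideanSpace ℝ (Fin d) => Real.exp (-b * ‖v‖ ^ 2)) := by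
  have h := (GaussianFourier.integrable_cexp_neg_mul_sq_norm_add
      (V := EuclideanSpace ℝ (Fin d)) (b := (b : ℂ)) (by simpa using hb) 0 0).norm
  convert h using 2 with v
  rw [Complex.norm_exp]
  norm_num
  left
  norm_cast

lemma aux_poly_gauss_int {d : ℕ} {b : ℝ} (hb : 0 < b) :
    Integrable (fun v : EuclideanSpace ℝ (Fin d) =>
      (1 + ‖v‖) ^ 2 * Real.exp (-b * ‖v‖ ^ 2)) := by
  refine ((aux_gauss_int (d := d) (half_pos hb)).const_mul (2 + 4 / b)).mono'
    (Continuous.aestronglyMeasurable (by continuity)) ?_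
  filter_upwards with v
  set t := ‖v‖ with ht
  have ht0 : 0 ≤ t := norm_nonneg v
  have h1 : (1 + t) ^ 2 ≤ 2 + 2 * t ^ 2 := by nlinarith [sq_nonneg (1 - t)]
  have h2 : b / 2 * t ^ 2 ≤ Real.exp (b / 2 * t ^ 2) := (Real.add_one_le_exp _).trans' (by linarith)
  have he : Real.exp (-b * t ^ 2) = Real.exp (-(b/2) * t ^ 2) * Real.exp (-(b/2) * t ^ 2) := by
    rw [← Real.exp_add]; ring_nf
  have hexp_pos : (0:ℝ) < Real.exp (-(b/2) * t ^ 2) := Real.exp_pos _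
  have hexp_le : Real.exp (-(b/2) * t ^ 2) ≤ 1 := Real.exp_le_one_iff.mpr (by nlinarith)
  have hmul : Real.exp (-(b/2) * t ^ 2) * Real.exp (b / 2 * t ^ 2) = 1 := by
    rw [← Real.exp_add]; ring_nf; exact Real.exp_zero
  have key : (1 + t) ^ 2 * Real.exp (-(b/2) * t ^ 2) ≤ 2 + 4 / b := by
    have h3 : t ^ 2 * Real.exp (-(b/2) * t ^ 2) ≤ 2 / b := by
      have := mul_le_mul_of_nonneg_left h2 (le_of_lt hexp_pos)
      rw [hmul] at this
      calc t ^ 2 * Real.exp (-(b/2) * t ^ 2)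
          = 2 / b * (Real.exp (-(b/2) * t ^ 2) * (b / 2 * t ^ 2)) := by field_simp
        _ ≤ 2 / b * 1 := by
            apply mul_le_mul_of_nonneg_left this (by positivity)
        _ = 2 / b := mul_one _
    have h4 : (4:ℝ) / b = 2 * (2 / b) := by ring
    nlinarith [mul_le_mul_of_nonneg_right h1 hexp_pos.le, h3, hexp_le, hexp_pos.le]
  have : ‖(1 + t) ^ 2 * Real.exp (-b * t ^ 2)‖ = (1 + t) ^ 2 * Real.exp (-b * t ^ 2) := by
    rw [Real.norm_eq_abs, abs_of_nonneg]; positivity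
  rw [this, he, ← mul_assoc]
  exact mul_le_mul_of_nonneg_right key hexp_pos.le

lemma aux_master_int {d : ℕ} {b : ℝ} (hb : 0 < b) (u : EuclideanSpace ℝ (Fin d))
    {F : Type*} [NormedAddCommGroup F]
    (h : EuclideanSpace ℝ (Fin d) → F) (hm : AEStronglyMeasurable h volume)
    (K : ℝ)
    (hK : ∀ v, ‖h v‖ ≤ K * ((1 + ‖v - u‖) ^ 2 * Real.exp (-b * ‖v - u‖ ^ 2))) :
    Integrable h := by
  have hbase : Integrable (fun v : EuclideanSpace ℝ (Fin d) =>
      K * ((1 + ‖v - u‖) ^ 2 * Real.exp (-b * ‖v - u‖ ^ 2))) := by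
    exact (Integrable.comp_sub_right (aux_poly_gauss_int hb) u).const_mul K
  exact hbase.mono' hm (Filter.Eventually.of_forall hK)

-- quadratic form lemmas
lemma aux_sym {d : ℕ} {S : Matrix (Fin d) (Fin d) ℝ} (hS : S.IsHermitian)
    (x y : EuclideanSpace ℝ (Fin d)) :
    ⟪Matrix.toEuclideanLin S x, y⟫ = ⟪x, Matrix.toEuclideanLin S y⟫ :=
  (Matrix.isHermitian_iff_isSymmetric.mp hS) x y

lemma aux_pos {d : ℕ} {S : Matrix (Fin d) (Fin d) ℝ} (hS : S.PosDef)
    (x : EuclideanSpace ℝ (Fin d)) (hx : x ≠ 0) :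
    0 < ⟪x, Matrix.toEuclideanLin S x⟫ := by
  have h := hS.dotProduct_mulVec_pos (x := (WithLp.equiv 2 _) x) (by simpa using hx)
  simpa [PiLp.inner_apply, dotProduct, Matrix.toEuclideanLin_apply,
    Matrix.mulVec, mul_comm] using h

lemma aux_nonneg {d : ℕ} {S : Matrix (Fin d) (Fin d) ℝ} (hS : S.PosDef)
    (x : EuclideanSpace ℝ (Fin d)) :
    0 ≤ ⟪x, Matrix.toEuclideanLin S x⟫ := by
  rcases eq_or_ne x 0 with h | h
  · simp [h]
  · exact (aux_pos hS x h).le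

lemma aux_coercive {d : ℕ} (hd : 1 ≤ d) {S : Matrix (Fin d) (Fin d) ℝ} (hS : S.PosDef) :
    ∃ c > 0, ∀ x : EuclideanSpace ℝ (Fin d),
      c * ‖x‖ ^ 2 ≤ ⟪x, Matrix.toEuclideanLin S x⟫ := by
  set L : EuclideanSpace ℝ (Fin d) →L[ℝ] EuclideanSpace ℝ (Fin d) :=
    LinearMap.toContinuousLinearMap (Matrix.toEuclideanLin S) with hL
  have hLcoe : ∀ x, L x = Matrix.toEuclideanLin S x := fun x => rfl
  set q : EuclideanSpace ℝ (Fin d) → ℝ := fun x => ⟪x, L x⟫ with hqdef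
  have hqc : Continuous q := continuous_id.inner L.continuous
  have : Nontrivial (EuclideanSpace ℝ (Fin d)) := by
    apply Module.nontrivial_of_finrank_pos (R := ℝ)
    rw [finrank_euclideanSpace_fin]; omega
  obtain ⟨x₀, hx₀s, hx₀min⟩ := (isCompact_sphere (0 : EuclideanSpace ℝ (Fin d)) 1).exists_isMinOn
    (NormedSpace.sphere_nonempty.mpr zero_le_one) hqc.continuousOn
  have hx₀ : ‖x₀‖ = 1 := by simpa using hx₀s
  have hx₀pos : 0 < q x₀ := by
    rw [hqdef]
    exact aux_pos hS x₀ (by intro h; rw [h] at hx₀; simp at hx₀)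
  refine ⟨q x₀, hx₀pos, fun x => ?_⟩
  rcases eq_or_ne x 0 with h | h
  · simp [h, hqdef, hLcoe]
  · have hxn : ‖x‖ ≠ 0 := norm_ne_zero_iff.mpr h
    set y : EuclideanSpace ℝ (Fin d) := ‖x‖⁻¹ • x with hy
    have hys : y ∈ Metric.sphere (0 : EuclideanSpace ℝ (Fin d)) 1 := by
      simp [hy, norm_smul, abs_of_nonneg (inv_nonneg.mpr (norm_nonneg x)),
        inv_mul_cancel₀ hxn]
    have hmin : q x₀ ≤ q y := hx₀min hys
    have hq : q y = (‖x‖⁻¹) ^ 2 * ⟪x, Matrix.toEuclideanLin S x⟫ := by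
      rw [hqdef]
      simp only [hy, hLcoe, LinearMap.map_smul, real_inner_smul_left, real_inner_smul_right]
      ring
    rw [hq] at hmin
    have h2 := mul_le_mul_of_nonneg_right hmin (sq_nonneg ‖x‖)
    calc q x₀ * ‖x‖ ^ 2 ≤ (‖x‖⁻¹) ^ 2 * ⟪x, Matrix.toEuclideanLin S x⟫ * ‖x‖ ^ 2 := h2
      _ = ⟪x, Matrix.toEuclideanLin S x⟫ := by field_simp

lemma aux_grad {d : ℕ} {S : Matrix (Fin d) (Fin d) ℝ} (hS : S.IsHermitian)
    (u : EuclideanSpace ℝ (Fin d)) (C : ℝ)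
    (f : EuclideanSpace ℝ (Fin d) → ℝ)
    (hf : ∀ v, f v = C * Real.exp (-(1 / 2) * ⟪v - u, Matrix.toEuclideanLin S (v - u)⟫))
    (v : EuclideanSpace ℝ (Fin d)) :
    gradient f v = (-(f v)) • (Matrix.toEuclideanLin S (v - u)) := by
  set L : EuclideanSpace ℝ (Fin d) →L[ℝ] EuclideanSpace ℝ (Fin d) :=
    LinearMap.toContinuousLinearMap (Matrix.toEuclideanLin S) with hL
  have hLcoe : ∀ x, Matrix.toEuclideanLin S x = L x := fun _ => rfl
  have hfun : f = fun w => C * Real.exp (-(1 / 2) * ⟪w - u, L (w - u)⟫) := by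
    funext w; rw [hf w, hLcoe]
  have h1 : HasFDerivAt (fun w : EuclideanSpace ℝ (Fin d) => w - u)
      (ContinuousLinearMap.id ℝ _) v := (hasFDerivAt_id v).sub_const u
  have h2 : HasFDerivAt (fun w : EuclideanSpace ℝ (Fin d) => L (w - u))
      (L.comp (ContinuousLinearMap.id ℝ _)) v := L.hasFDerivAt.comp v h1
  have hq := h1.inner ℝ h2
  have h3 := hq.const_mul (-(1 / 2) : ℝ)
  have h4 := h3.exp
  have h5 := h4.const_mul C
  have hgrad : HasGradientAt (fun w => C * Real.exp (-(1 / 2) * ⟪w - u, L (w - u)⟫))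
      ((-(C * Real.exp (-(1 / 2) * ⟪v - u, L (v - u)⟫))) • (L (v - u))) v := by
    rw [hasGradientAt_iff_hasFDerivAt]
    convert h5 using 1
    · rfl
    ext h
    simp only [InnerProductSpace.toDual_apply_apply, ContinuousLinearMap.smul_apply,
      ContinuousLinearMap.comp_apply, ContinuousLinearMap.prod_apply,
      ContinuousLinearMap.coe_id', id_eq, fderivInnerCLM_apply, smul_eq_mul]
    have hsym : ⟪v - u, L h⟫ = ⟪L (v - u), h⟫ := by
      rw [← hLcoe, ← hLcoe, aux_sym hS]
    have hcomm : ⟪h, L (v - u)⟫ = ⟪L (v - u), h⟫ := real_inner_comm _ _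
    rw [real_inner_smul_left, hsym, hcomm]
    ring
  rw [hfun, hgrad.gradient, hLcoe]

set_option maxHeartbeats 1000000 in
/-- Positivity of the denominator n_β·B_β − A_β·p_β of the effective
temperature for a multivariate Gaussian distribution and a continuous,
bounded, strictly positive weight β. -/
theorem stmt11 (d : ℕ) (hd : 1 ≤ d)
    (S : Matrix (Fin d) (Fin d) ℝ) (hS : S.PosDef)
    (u : EuclideanSpace ℝ (Fin d)) (C : ℝ) (hC : 0 < C)
    (f : EuclideanSpace ℝ (Fin d) → ℝ)
    (hf : ∀ v, f v =
      C * Real.exp (-(1 / 2) * ⟪v - u, Matrix.toEuclideanLin S⁻¹ (v - u)⟫))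
    (β : EuclideanSpace ℝ (Fin d) → ℝ)
    (hβc : Continuous β) (hβb : ∃ M, ∀ v, |β v| ≤ M) (hβpos : ∀ v, 0 < β v)
    (nβ Bβ : ℝ) (Aβ pβ : EuclideanSpace ℝ (Fin d))
    (hn : nβ = ∫ v, β v * f v)
    (hp : pβ = ∫ v, (β v * f v) • v)
    (hA : Aβ = -∫ v, β v • gradient f v)
    (hB : Bβ = -∫ v, β v * ⟪v, gradient f v⟫) :
    0 < nβ * Bβ - ⟪Aβ, pβ⟫ := by
  classical
  obtain ⟨M, hM⟩ := hβb
  set T := Matrix.toEuclideanLin S⁻¹ with hT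
  have hSinv : (S⁻¹).PosDef := hS.inv
  have hHerm : (S⁻¹).IsHermitian := hSinv.1
  -- gradient formula
  have hgrad : ∀ v, gradient f v = (-(f v)) • (T (v - u)) := aux_grad hHerm u C f hf
  -- coercivity
  obtain ⟨c₀, hc₀, hcoer⟩ := aux_coercive hd hSinv
  set b := c₀ / 2 with hbdef
  have hb : 0 < b := half_pos hc₀
  -- continuous linear map version of T
  set Lc : EuclideanSpace ℝ (Fin d) →L[ℝ] EuclideanSpace ℝ (Fin d) :=
    LinearMap.toContinuousLinearMap T with hLc
  have hLcoe : ∀ x, T x = Lc x := fun _ => rfl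
  -- basic facts about f
  have hfpos : ∀ v, 0 < f v := by
    intro v; rw [hf v]; positivity
  have hfc : Continuous f := by
    have : f = fun v => C * Real.exp (-(1 / 2) * ⟪v - u, Lc (v - u)⟫) := by
      funext v; rw [hf v, hLcoe]
    rw [this]
    exact continuous_const.mul (Real.continuous_exp.comp (continuous_const.mul
      ((continuous_id.sub continuous_const).inner
        (Lc.continuous.comp (continuous_id.sub continuous_const)))))
  have hfle : ∀ v, f v ≤ C * Real.exp (-b * ‖v - u‖ ^ 2) := by
    intro v
    rw [hf v]
    have h1 : -(1 / 2) * ⟪v - u, T (v - u)⟫ ≤ -b * ‖v - u‖ ^ 2 := by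
      have := hcoer (v - u)
      rw [hbdef]; linarith
    exact mul_le_mul_of_nonneg_left (Real.exp_le_exp.mpr h1) hC.le
  have hM0 : 0 ≤ M := (abs_nonneg _).trans (hM 0)
  have hgf : ∀ v, |β v * f v| ≤ M * C * Real.exp (-b * ‖v - u‖ ^ 2) := by
    intro v
    rw [abs_mul, abs_of_pos (hfpos v), mul_assoc]
    exact mul_le_mul (hM v) (hfle v) (hfpos v).le hM0
  -- generic norm facts
  have hone_le : ∀ v : EuclideanSpace ℝ (Fin d), (1:ℝ) ≤ (1 + ‖v - u‖) ^ 2 := by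
    intro v; nlinarith [norm_nonneg (v - u)]
  have hvle : ∀ v : EuclideanSpace ℝ (Fin d), ‖v‖ ≤ (1 + ‖u‖) * (1 + ‖v - u‖) := by
    intro v
    have h1 : ‖v‖ ≤ ‖v - u‖ + ‖u‖ := by
      simpa using norm_add_le (v - u) u
    nlinarith [norm_nonneg u, norm_nonneg (v - u)]
  have hvle2 : ∀ v : EuclideanSpace ℝ (Fin d), ‖v‖ ≤ (1 + ‖u‖) * (1 + ‖v - u‖) ^ 2 := by
    intro v
    have h1 := hvle v
    nlinarith [mul_nonneg (by positivity : (0:ℝ) ≤ 1 + ‖u‖)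
      (mul_nonneg (norm_nonneg (v - u)) (by positivity : (0:ℝ) ≤ 1 + ‖v - u‖))]
  have htle : ∀ v : EuclideanSpace ℝ (Fin d), ‖v - u‖ ≤ (1 + ‖v - u‖) ^ 2 := by
    intro v; nlinarith [norm_nonneg (v - u)]
  have hMC0 : 0 ≤ M * C := mul_nonneg hM0 hC.le
  have hgc : Continuous fun v => β v * f v := hβc.mul hfc
  have hgfnn : ∀ v, 0 ≤ M * C * Real.exp (-b * ‖v - u‖ ^ 2) := by
    intro v; positivity
  -- integrability of the four basic integrands
  have hI0int : Integrable (fun v : EuclideanSpace ℝ (Fin d) => β v * f v) := by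
    refine aux_master_int hb u _ hgc.aestronglyMeasurable (M * C) fun v => ?_
    calc ‖β v * f v‖ = |β v * f v| := rfl
      _ ≤ M * C * Real.exp (-b * ‖v - u‖ ^ 2) := hgf v
      _ ≤ M * C * ((1 + ‖v - u‖) ^ 2 * Real.exp (-b * ‖v - u‖ ^ 2)) := by
          nlinarith [hone_le v, Real.exp_pos (-b * ‖v - u‖ ^ 2), hMC0,
            mul_nonneg hMC0 (Real.exp_pos (-b * ‖v - u‖ ^ 2)).le]
  have hIvint : Integrable (fun v : EuclideanSpace ℝ (Fin d) => (β v * f v) • v) := by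
    refine aux_master_int hb u _ (hgc.smul continuous_id).aestronglyMeasurable
      (M * C * (1 + ‖u‖)) fun v => ?_
    calc ‖(β v * f v) • v‖ = |β v * f v| * ‖v‖ := by
          rw [norm_smul, Real.norm_eq_abs]
      _ ≤ (M * C * Real.exp (-b * ‖v - u‖ ^ 2)) * ((1 + ‖u‖) * (1 + ‖v - u‖) ^ 2) :=
          mul_le_mul (hgf v) (hvle2 v) (norm_nonneg v) (hgfnn v)
      _ = M * C * (1 + ‖u‖) * ((1 + ‖v - u‖) ^ 2 * Real.exp (-b * ‖v - u‖ ^ 2)) := by ring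
  have hLcont : Continuous fun v : EuclideanSpace ℝ (Fin d) => Lc (v - u) :=
    Lc.continuous.comp (continuous_id.sub continuous_const)
  have hLnorm : ∀ v : EuclideanSpace ℝ (Fin d),
      ‖Lc (v - u)‖ ≤ ‖Lc‖ * (1 + ‖v - u‖) ^ 2 := by
    intro v
    calc ‖Lc (v - u)‖ ≤ ‖Lc‖ * ‖v - u‖ := Lc.le_opNorm _
      _ ≤ ‖Lc‖ * (1 + ‖v - u‖) ^ 2 :=
          mul_le_mul_of_nonneg_left (htle v) (norm_nonneg Lc)
  have hILint : Integrable (fun v : EuclideanSpace ℝ (Fin d) => (β v * f v) • (T (v - u))) := by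
    simp only [hLcoe]
    refine aux_master_int hb u _ (hgc.smul hLcont).aestronglyMeasurable
      (M * C * ‖Lc‖) fun v => ?_
    calc ‖(β v * f v) • Lc (v - u)‖ = |β v * f v| * ‖Lc (v - u)‖ := by
          rw [norm_smul, Real.norm_eq_abs]
      _ ≤ (M * C * Real.exp (-b * ‖v - u‖ ^ 2)) * (‖Lc‖ * (1 + ‖v - u‖) ^ 2) :=
          mul_le_mul (hgf v) (hLnorm v) (norm_nonneg _) (hgfnn v)
      _ = M * C * ‖Lc‖ * ((1 + ‖v - u‖) ^ 2 * Real.exp (-b * ‖v - u‖ ^ 2)) := by ring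
  have hinner_bound : ∀ v : EuclideanSpace ℝ (Fin d),
      |⟪v, T (v - u)⟫| ≤ (1 + ‖u‖) * ‖Lc‖ * (1 + ‖v - u‖) ^ 2 := by
    intro v
    rw [hLcoe]
    calc |⟪v, Lc (v - u)⟫| ≤ ‖v‖ * ‖Lc (v - u)‖ := abs_real_inner_le_norm _ _
      _ ≤ ((1 + ‖u‖) * (1 + ‖v - u‖)) * (‖Lc‖ * (1 + ‖v - u‖)) := by
          refine mul_le_mul (hvle v) ?_ (norm_nonneg _) ?_
          · calc ‖Lc (v - u)‖ ≤ ‖Lc‖ * ‖v - u‖ := Lc.le_opNorm _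
              _ ≤ ‖Lc‖ * (1 + ‖v - u‖) := by
                  refine mul_le_mul_of_nonneg_left ?_ (norm_nonneg Lc)
                  linarith [norm_nonneg (v - u)]
          · positivity
      _ = (1 + ‖u‖) * ‖Lc‖ * (1 + ‖v - u‖) ^ 2 := by ring
  have hIBint : Integrable
      (fun v : EuclideanSpace ℝ (Fin d) => (β v * f v) * ⟪v, T (v - u)⟫) := by
    have hcont : Continuous fun v : EuclideanSpace ℝ (Fin d) => (β v * f v) * ⟪v, T (v - u)⟫ := by
      simp only [hLcoe]
      exact hgc.mul (continuous_id.inner hLcont)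
    refine aux_master_int hb u _ hcont.aestronglyMeasurable
      (M * C * ((1 + ‖u‖) * ‖Lc‖)) fun v => ?_
    calc ‖(β v * f v) * ⟪v, T (v - u)⟫‖ = |β v * f v| * |⟪v, T (v - u)⟫| := by
          rw [Real.norm_eq_abs, abs_mul]
      _ ≤ (M * C * Real.exp (-b * ‖v - u‖ ^ 2)) * ((1 + ‖u‖) * ‖Lc‖ * (1 + ‖v - u‖) ^ 2) :=
          mul_le_mul (hgf v) (hinner_bound v) (abs_nonneg _) (hgfnn v)
      _ = M * C * ((1 + ‖u‖) * ‖Lc‖) * ((1 + ‖v - u‖) ^ 2 * Real.exp (-b * ‖v - u‖ ^ 2)) := by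
          ring
  -- rewrite Aβ and Bβ using the gradient formula
  have hAeq : Aβ = ∫ v, (β v * f v) • T (v - u) := by
    rw [hA]
    have heq : (fun v => β v • gradient f v)
        = fun v => -((β v * f v) • T (v - u)) := by
      funext v
      rw [hgrad v, smul_smul, mul_neg, neg_smul]
    rw [heq, integral_neg, neg_neg]
  have hBeq : Bβ = ∫ v, (β v * f v) * ⟪v, T (v - u)⟫ := by
    rw [hB]
    have heq : (fun v => β v * ⟪v, gradient f v⟫)
        = fun v => -((β v * f v) * ⟪v, T (v - u)⟫) := by
      funext v
      rw [hgrad v, real_inner_smul_right]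
      ring
    rw [heq, integral_neg, neg_neg]
  -- positivity of nβ
  have hgpos : ∀ v, 0 < β v * f v := fun v => mul_pos (hβpos v) (hfpos v)
  have hnpos : 0 < nβ := by
    rw [hn, integral_pos_iff_support_of_nonneg (fun v => (hgpos v).le) hI0int]
    have hsupp : Function.support (fun v => β v * f v) = Set.univ := by
      ext v
      simp only [Function.support, Set.mem_setOf_eq, Set.mem_univ, iff_true]
      exact (hgpos v).ne'
    rw [hsupp]
    exact isOpen_univ.measure_pos volume ⟨0, trivial⟩
  set c : EuclideanSpace ℝ (Fin d) := nβ⁻¹ • pβ with hcdef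
  -- integrability of the remaining integrands
  have hvcle : ∀ v : EuclideanSpace ℝ (Fin d),
      ‖v - c‖ ≤ (1 + ‖u - c‖) * (1 + ‖v - u‖) := by
    intro v
    have h1 : ‖v - c‖ ≤ ‖v - u‖ + ‖u - c‖ := by
      simpa using norm_add_le (v - u) (u - c)
    nlinarith [norm_nonneg (u - c), norm_nonneg (v - u)]
  have hLcC : Continuous fun v : EuclideanSpace ℝ (Fin d) => Lc (v - c) :=
    Lc.continuous.comp (continuous_id.sub continuous_const)
  have hJint : Integrable
      (fun v : EuclideanSpace ℝ (Fin d) => (β v * f v) * ⟪v - c, T (v - c)⟫) := by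
    have hcont : Continuous fun v : EuclideanSpace ℝ (Fin d) =>
        (β v * f v) * ⟪v - c, T (v - c)⟫ := by
      simp only [hLcoe]
      exact hgc.mul ((continuous_id.sub continuous_const).inner hLcC)
    refine aux_master_int hb u _ hcont.aestronglyMeasurable
      (M * C * (‖Lc‖ * (1 + ‖u - c‖) ^ 2)) fun v => ?_
    calc ‖(β v * f v) * ⟪v - c, T (v - c)⟫‖
        = |β v * f v| * |⟪v - c, T (v - c)⟫| := by rw [Real.norm_eq_abs, abs_mul]
      _ ≤ (M * C * Real.exp (-b * ‖v - u‖ ^ 2)) *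
          (‖Lc‖ * ((1 + ‖u - c‖) * (1 + ‖v - u‖)) ^ 2) := by
          refine mul_le_mul (hgf v) ?_ (abs_nonneg _) (hgfnn v)
          rw [hLcoe]
          calc |⟪v - c, Lc (v - c)⟫| ≤ ‖v - c‖ * ‖Lc (v - c)‖ := abs_real_inner_le_norm _ _
            _ ≤ ‖v - c‖ * (‖Lc‖ * ‖v - c‖) :=
                mul_le_mul_of_nonneg_left (Lc.le_opNorm _) (norm_nonneg _)
            _ = ‖Lc‖ * ‖v - c‖ ^ 2 := by ring
            _ ≤ ‖Lc‖ * ((1 + ‖u - c‖) * (1 + ‖v - u‖)) ^ 2 := by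
                refine mul_le_mul_of_nonneg_left ?_ (norm_nonneg Lc)
                exact pow_le_pow_left₀ (norm_nonneg _) (hvcle v) 2
      _ = M * C * (‖Lc‖ * (1 + ‖u - c‖) ^ 2) *
          ((1 + ‖v - u‖) ^ 2 * Real.exp (-b * ‖v - u‖ ^ 2)) := by ring
  have h1int : Integrable
      (fun v : EuclideanSpace ℝ (Fin d) => ⟪c, (β v * f v) • T (v - u)⟫) := by
    exact ContinuousLinearMap.integrable_comp (innerSL ℝ c) hILint
  have hvc_int : Integrable
      (fun v : EuclideanSpace ℝ (Fin d) => (β v * f v) • (v - c)) := by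
    have heq : (fun v : EuclideanSpace ℝ (Fin d) => (β v * f v) • (v - c))
        = fun v => (β v * f v) • v - (β v * f v) • c := by
      funext v; rw [smul_sub]
    rw [heq]
    exact hIvint.sub (hI0int.smul_const c)
  have h2int : Integrable
      (fun v : EuclideanSpace ℝ (Fin d) => ⟪(β v * f v) • (v - c), T (c - u)⟫) := by
    have heq : (fun v : EuclideanSpace ℝ (Fin d) => ⟪(β v * f v) • (v - c), T (c - u)⟫)
        = fun v => ⟪T (c - u), (β v * f v) • (v - c)⟫ := by
      funext v; rw [real_inner_comm]
    rw [heq]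
    exact ContinuousLinearMap.integrable_comp (innerSL ℝ (T (c - u))) hvc_int
  -- pointwise expansion
  have hpoint : ∀ v, (β v * f v) * ⟪v - c, T (v - c)⟫
      = (β v * f v) * ⟪v, T (v - u)⟫ - ⟪c, (β v * f v) • T (v - u)⟫
        - ⟪(β v * f v) • (v - c), T (c - u)⟫ := by
    intro v
    have hsplit : T (v - c) = T (v - u) - T (c - u) := by
      rw [← map_sub]
      congr 1
      abel
    rw [hsplit]
    simp only [inner_sub_right, inner_sub_left, real_inner_smul_left, real_inner_smul_right]
    ring
  -- value of the J integral
  have hzero : (∫ v, (β v * f v) • (v - c)) = 0 := by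
    have heq : (fun v : EuclideanSpace ℝ (Fin d) => (β v * f v) • (v - c))
        = fun v => (β v * f v) • v - (β v * f v) • c := by
      funext v; rw [smul_sub]
    rw [heq, integral_sub hIvint (hI0int.smul_const c), integral_smul_const,
      ← hp, ← hn, hcdef, smul_smul, mul_inv_cancel₀ hnpos.ne', one_smul, sub_self]
  have hJeq : (∫ v, (β v * f v) * ⟪v - c, T (v - c)⟫) = Bβ - ⟪c, Aβ⟫ := by
    rw [show (fun v : EuclideanSpace ℝ (Fin d) => (β v * f v) * ⟪v - c, T (v - c)⟫)
        = fun v => ((β v * f v) * ⟪v, T (v - u)⟫ - ⟪c, (β v * f v) • T (v - u)⟫)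
          - ⟪(β v * f v) • (v - c), T (c - u)⟫ from funext hpoint]
    have hAB : Integrable (fun v : EuclideanSpace ℝ (Fin d) =>
        (β v * f v) * ⟪v, T (v - u)⟫ - ⟪c, (β v * f v) • T (v - u)⟫) := hIBint.sub h1int
    rw [integral_sub hAB h2int, integral_sub hIBint h1int]
    rw [integral_inner hILint c]
    rw [show (fun v : EuclideanSpace ℝ (Fin d) => ⟪(β v * f v) • (v - c), T (c - u)⟫)
        = fun v => ⟪T (c - u), (β v * f v) • (v - c)⟫ from
        funext fun v => real_inner_comm _ _]
    rw [integral_inner hvc_int, hzero, inner_zero_right, sub_zero, ← hBeq, ← hAeq]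
  -- positivity of the J integral
  have hJpos : 0 < ∫ v, (β v * f v) * ⟪v - c, T (v - c)⟫ := by
    rw [integral_pos_iff_support_of_nonneg
      (fun v => mul_nonneg (hgpos v).le (aux_nonneg hSinv _)) hJint]
    have : Nontrivial (EuclideanSpace ℝ (Fin d)) := by
      apply Module.nontrivial_of_finrank_pos (R := ℝ)
      rw [finrank_euclideanSpace_fin]; omega
    have hsub : {c}ᶜ ⊆ Function.support
        (fun v => (β v * f v) * ⟪v - c, T (v - c)⟫) := by
      intro v hv
      have hvne : v - c ≠ 0 := sub_ne_zero.mpr hv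
      exact (mul_pos (hgpos v) (aux_pos hSinv _ hvne)).ne'
    refine lt_of_lt_of_le ?_ (measure_mono hsub)
    obtain ⟨x, hx⟩ := exists_ne c
    exact isOpen_compl_singleton.measure_pos volume ⟨x, hx⟩
  -- conclusion
  have hfinal : nβ * (Bβ - ⟪c, Aβ⟫) = nβ * Bβ - ⟪Aβ, pβ⟫ := by
    rw [hcdef, real_inner_smul_left, real_inner_comm pβ Aβ]
    field_simp
  have := mul_pos hnpos (hJeq ▸ hJpos)
  linarith [this, hfinal]
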